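/- In the setting of a belief measure ν on Ω with Choquet representation P_ν on compact sets, and bounded random variables Y_1, ..., Y_n on Ω, define on the product (𝒦(Ω))^∞ with i.i.d. product measure P_ν^∞ the random variables Z_i(K_1 × K_2 × ...) = inf_{ω ∈ K_i} Y_i(ω). Then Z_1, ..., Z_n are independent under P_ν^∞, with P_ν^∞(Z_i ≥ t_i for all i) = ∏_i ν(Y_i ≥ t_i) for all t_1, ..., t_n ∈ ℝ. -/

import Mathlib

open MeasureTheory TopologicalSpace ProbabilityTheory Set

/-- Key lemma: for an "i.i.d." measure on `ℕ → K` (in the sense that cylinders with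
measurable sides have product measure), cylinders with *arbitrary* sides also have
product (outer) measure. -/
lemma iid_cylinder_key {K : Type*} [MeasurableSpace K]
    (Pν : Measure K) [IsProbabilityMeasure Pν]
    (Pinf : Measure (ℕ → K)) [IsProbabilityMeasure Pinf]
    (hprod : ∀ (m : ℕ) (s : Fin m → Set K),
      (∀ i, MeasurableSet (s i)) →
      Pinf {f | ∀ i : Fin m, f i ∈ s i} = ∏ i, Pν (s i))
    (n : ℕ) (u : Fin n → Set K) :
    Pinf {f | ∀ i : Fin n, f i ∈ u i} = ∏ i, Pν (u i) := by
  classical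
  -- range-indexed version of hprod
  have hprod' : ∀ (m : ℕ) (s : ℕ → Set K), (∀ k, MeasurableSet (s k)) →
      Pinf {f | ∀ k < m, f k ∈ s k} = ∏ k ∈ Finset.range m, Pν (s k) := by
    intro m s hs
    have h1 : {f : ℕ → K | ∀ k < m, f k ∈ s k} = {f | ∀ i : Fin m, f i ∈ s i} := by
      ext f
      constructor
      · intro h i; exact h i i.2
      · intro h k hk; exact h ⟨k, hk⟩
    rw [h1, hprod m (fun i => s i) (fun i => hs i)]
    exact Fin.prod_univ_eq_prod_range (fun k => Pν (s k)) m
  -- measurability of cylinders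
  have hcylm : ∀ (m : ℕ) (s : ℕ → Set K), (∀ k, MeasurableSet (s k)) →
      MeasurableSet {f : ℕ → K | ∀ k < m, f k ∈ s k} := by
    intro m s hs
    have h1 : {f : ℕ → K | ∀ k < m, f k ∈ s k}
        = ⋂ k ∈ Finset.range m, (fun f : ℕ → K => f k) ⁻¹' s k := by
      ext f; simp [Finset.mem_range]
    rw [h1]
    exact MeasurableSet.biInter (Finset.range m).countable_toSet
      (fun k _ => measurable_pi_apply k (hs k))
  -- the tail map and tail measure
  set τ : (ℕ → K) → (ℕ → K) := fun f k => f (n + k) with hτdef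
  have hτ : Measurable τ := measurable_pi_lambda _ fun k => measurable_pi_apply _
  set PT := Pinf.map τ with hPTdef
  haveI : IsProbabilityMeasure PT := Measure.isProbabilityMeasure_map hτ.aemeasurable
  have hPT : ∀ (m : ℕ) (s : ℕ → Set K), (∀ k, MeasurableSet (s k)) →
      PT {g | ∀ k < m, g k ∈ s k} = ∏ k ∈ Finset.range m, Pν (s k) := by
    intro m s hs
    rw [hPTdef, Measure.map_apply hτ (hcylm m s hs)]
    have hpre : τ ⁻¹' {g | ∀ k < m, g k ∈ s k}
        = {f : ℕ → K | ∀ j < n + m, f j ∈ (if j < n then univ else s (j - n))} := by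
      ext f
      simp only [mem_preimage, mem_setOf_eq, hτdef]
      constructor
      · intro h j hj
        by_cases hjn : j < n
        · simp [hjn]
        · rw [if_neg hjn]
          have hlt : j - n < m := by omega
          have h2 := h (j - n) hlt
          rwa [Nat.add_sub_cancel' (le_of_not_gt hjn)] at h2
      · intro h k hk
        have h2 := h (n + k) (by omega)
        rw [if_neg (by omega)] at h2
        simpa using h2
    rw [hpre, hprod' (n + m) _ (fun j => by by_cases h : j < n <;> simp [h, hs])]
    rw [Finset.prod_range_add]
    have e1 : (∏ j ∈ Finset.range n, Pν (if j < n then univ else s (j - n))) = 1 := by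
      apply Finset.prod_eq_one
      intro j hj
      rw [if_pos (Finset.mem_range.mp hj), measure_univ]
    have e2 : ∀ x ∈ Finset.range m,
        Pν (if n + x < n then univ else s (n + x - n)) = Pν (s x) := by
      intro x _
      rw [if_neg (by omega), Nat.add_sub_cancel_left]
    rw [e1, one_mul]
    exact Finset.prod_congr rfl e2
  -- the splitting map
  set ψ : (Fin n → K) × (ℕ → K) → (ℕ → K) :=
    fun p k => if h : k < n then p.1 ⟨k, h⟩ else p.2 (k - n) with hψdef
  have hψ : Measurable ψ := by
    apply measurable_pi_lambda
    intro k
    by_cases h : k < n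
    · simp only [hψdef, dif_pos h]
      exact (measurable_pi_apply _).comp measurable_fst
    · simp only [hψdef, dif_neg h]
      exact (measurable_pi_apply _).comp measurable_snd
  set μN : Measure (Fin n → K) := Measure.pi (fun _ => Pν) with hμNdef
  haveI : IsProbabilityMeasure μN := Measure.pi.instIsProbabilityMeasure _
  set P' := μN.prod PT with hP'def
  haveI : IsProbabilityMeasure P' := by rw [hP'def]; infer_instance
  -- Pinf equals the pushforward of the product measure
  have hext : Pinf = P'.map ψ := by
    set C : Set (Set (ℕ → K)) :=
      {S | ∃ (m : ℕ) (s : ℕ → Set K), (∀ k, MeasurableSet (s k)) ∧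
        S = {f | ∀ k < m, f k ∈ s k}} with hCdef
    have hgen : (inferInstance : MeasurableSpace (ℕ → K))
        = MeasurableSpace.generateFrom C := by
      apply le_antisymm
      · rw [show (inferInstance : MeasurableSpace (ℕ → K))
            = ⨆ k, MeasurableSpace.comap (fun f : ℕ → K => f k) inferInstance from rfl]
        apply iSup_le
        intro k s hs
        obtain ⟨B, hB, rfl⟩ := hs
        apply MeasurableSpace.measurableSet_generateFrom
        refine ⟨k + 1, fun j => if j = k then B else univ, fun j => by
          by_cases h : j = k <;> simp [h, hB], ?_⟩
        ext f
        simp only [mem_preimage, mem_setOf_eq]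
        constructor
        · intro hf j hj
          by_cases h : j = k
          · subst h; simpa using hf
          · simp [h]
        · intro hf
          have := hf k (Nat.lt_succ_self k)
          simpa using this
      · apply MeasurableSpace.generateFrom_le
        rintro S ⟨m, s, hs, rfl⟩
        exact hcylm m s hs
    have hpiC : IsPiSystem C := by
      rintro S1 ⟨m1, s1, hs1, rfl⟩ S2 ⟨m2, s2, hs2, rfl⟩ -
      refine ⟨max m1 m2, fun k =>
        (if k < m1 then s1 k else univ) ∩ (if k < m2 then s2 k else univ),
        fun k => ?_, ?_⟩
      · apply MeasurableSet.inter <;> [skip; skip] <;>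
          · split_ifs <;> simp [hs1, hs2]
      · ext f
        simp only [mem_inter_iff, mem_setOf_eq]
        constructor
        · rintro ⟨h1, h2⟩ k hk
          constructor
          · by_cases h : k < m1
            · rw [if_pos h]; exact h1 k h
            · rw [if_neg h]; trivial
          · by_cases h : k < m2
            · rw [if_pos h]; exact h2 k h
            · rw [if_neg h]; trivial
        · intro h
          constructor
          · intro k hk
            have h2 := (h k (lt_of_lt_of_le hk (le_max_left _ _))).1
            rwa [if_pos hk] at h2
          · intro k hk
            have h2 := (h k (lt_of_lt_of_le hk (le_max_right _ _))).2
            rwa [if_pos hk] at h2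
    haveI : IsProbabilityMeasure (P'.map ψ) := Measure.isProbabilityMeasure_map hψ.aemeasurable
    refine ext_of_generate_finite C hgen hpiC ?_ (by simp)
    rintro S ⟨m, s, hs, rfl⟩
    rw [hprod' m s hs, Measure.map_apply hψ (hcylm m s hs)]
    have hsplit : ψ ⁻¹' {f | ∀ k < m, f k ∈ s k}
        = (univ.pi fun i : Fin n => if (i : ℕ) < m then s i else univ) ×ˢ
          {g : ℕ → K | ∀ j < m - n, g j ∈ s (n + j)} := by
      ext ⟨x, g⟩
      simp only [mem_preimage, mem_setOf_eq, mem_prod, mem_univ_pi, hψdef]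
      constructor
      · intro h
        refine ⟨fun i => ?_, fun j hj => ?_⟩
        · by_cases hi : (i : ℕ) < m
          · have h2 := h i hi
            rw [dif_pos i.isLt, Fin.eta] at h2
            rwa [if_pos hi]
          · rw [if_neg hi]; trivial
        · have h2 := h (n + j) (by omega)
          rw [dif_neg (by omega)] at h2
          simpa using h2
      · rintro ⟨h1, h2⟩ k hk
        by_cases hkn : k < n
        · rw [dif_pos hkn]
          have h3 := h1 ⟨k, hkn⟩
          rwa [if_pos hk] at h3
        · rw [dif_neg hkn]
          have h3 := h2 (k - n) (by omega)
          rwa [Nat.add_sub_cancel' (le_of_not_gt hkn)] at h3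
    rw [hsplit, hP'def, Measure.prod_prod, hμNdef, Measure.pi_pi,
      hPT (m - n) _ (fun j => hs _)]
    rcases le_or_gt m n with hmn | hmn
    · rw [Nat.sub_eq_zero_of_le hmn]
      simp only [Finset.range_zero, Finset.prod_empty, mul_one]
      rw [show (∏ i : Fin n, Pν (if (i : ℕ) < m then s i else univ))
          = ∏ k ∈ Finset.range n, Pν (if k < m then s k else univ) from
        Fin.prod_univ_eq_prod_range (fun k => Pν (if k < m then s k else univ)) n]
      rw [← Finset.prod_subset (Finset.range_subset_range.mpr hmn)
        (fun x _ hx => by rw [if_neg (by simpa using hx), measure_univ])]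
      exact (Finset.prod_congr rfl fun k hk => by
        rw [if_pos (Finset.mem_range.mp hk)]).symm
    · have hm : m = n + (m - n) := (Nat.add_sub_cancel' hmn.le).symm
      conv_lhs => rw [hm]
      rw [Finset.prod_range_add]
      congr 1
      rw [show (∏ k ∈ Finset.range n, Pν (s k))
          = ∏ i : Fin n, Pν (s i) from
        (Fin.prod_univ_eq_prod_range (fun k => Pν (s k)) n).symm]
      refine Finset.prod_congr rfl fun i _ => ?_
      rw [if_pos (lt_of_lt_of_le i.isLt hmn.le)]
  -- now the two inequalities
  apply le_antisymm
  · calc Pinf {f | ∀ i : Fin n, f i ∈ u i}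
        ≤ Pinf {f | ∀ i : Fin n, f i ∈ toMeasurable Pν (u i)} :=
          measure_mono (fun f hf i => subset_toMeasurable _ _ (hf i))
      _ = ∏ i, Pν (toMeasurable Pν (u i)) :=
          hprod n _ (fun i => measurableSet_toMeasurable _ _)
      _ = ∏ i, Pν (u i) :=
          Finset.prod_congr rfl fun i _ => measure_toMeasurable _
  · rw [hext]
    refine le_trans (le_of_eq ?_) (Measure.le_map_apply hψ.aemeasurable _)
    have hpre : ψ ⁻¹' {f | ∀ i : Fin n, f i ∈ u i} = (univ.pi u) ×ˢ univ := by
      ext ⟨x, g⟩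
      simp only [mem_preimage, mem_setOf_eq, mem_prod, mem_univ_pi, mem_univ,
        and_true, hψdef]
      constructor
      · intro h i
        have h2 := h i
        rwa [dif_pos i.isLt, Fin.eta] at h2
      · intro h i
        rw [dif_pos i.isLt, Fin.eta]
        exact h i
    rw [hpre, hP'def, Measure.prod_prod, measure_univ, mul_one, hμNdef,
      Measure.pi_pi]

/-- Under the i.i.d. product `P_ν^∞` of the Choquet representation `P_ν`, the
variables `Z_i(K_1,K_2,...) = inf_{ω ∈ K_i} Y_i(ω)` (for `i < n`) are independent, with
`P_ν^∞(∀ i, Z_i ≥ t_i) = ∏ i, ν(Y_i ≥ t_i)`. -/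
theorem belief_inf_iid
    {Ω : Type*} [TopologicalSpace Ω] [PolishSpace Ω] [MeasurableSpace Ω] [BorelSpace Ω]
    [MeasurableSpace (NonemptyCompacts Ω)]
    (Pν : Measure (NonemptyCompacts Ω)) [IsProbabilityMeasure Pν]
    (ν : Set Ω → ℝ)
    (hrep : ∀ A : Set Ω, MeasurableSet A →
      ν A = (Pν {K : NonemptyCompacts Ω | (K : Set Ω) ⊆ A}).toReal)
    (Pinf : Measure (ℕ → NonemptyCompacts Ω)) [IsProbabilityMeasure Pinf]
    (hprod : ∀ (m : ℕ) (s : Fin m → Set (NonemptyCompacts Ω)),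
      (∀ i, MeasurableSet (s i)) →
      Pinf {f | ∀ i : Fin m, f i ∈ s i} = ∏ i, Pν (s i))
    (n : ℕ) (Y : Fin n → Ω → ℝ) (hYm : ∀ i, Measurable (Y i))
    (hYb : ∀ i, ∃ C, ∀ ω, |Y i ω| ≤ C) :
    iIndepFun
        (fun i (f : ℕ → NonemptyCompacts Ω) => sInf (Y i '' ((f i) : Set Ω))) Pinf ∧
    ∀ t : Fin n → ℝ,
      (Pinf {f : ℕ → NonemptyCompacts Ω |
          ∀ i : Fin n, t i ≤ sInf (Y i '' ((f i) : Set Ω))}).toReal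
        = ∏ i, ν {ω | t i ≤ Y i ω} := by
  classical
  have key := iid_cylinder_key Pν Pinf hprod
  constructor
  · rw [iIndepFun_iff_measure_inter_preimage_eq_mul]
    intro S sets _
    have h2 : ∀ i : Fin n,
        Pinf ((fun f : ℕ → NonemptyCompacts Ω => sInf (Y i '' ((f i) : Set Ω)))
          ⁻¹' sets i)
        = Pν {Kc : NonemptyCompacts Ω | sInf (Y i '' (Kc : Set Ω)) ∈ sets i} := by
      intro i
      have h3 : ((fun f : ℕ → NonemptyCompacts Ω => sInf (Y i '' ((f i) : Set Ω)))
            ⁻¹' sets i)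
          = {f : ℕ → NonemptyCompacts Ω | ∀ j : Fin n, f j ∈
              (if j = i then {Kc : NonemptyCompacts Ω |
                sInf (Y i '' (Kc : Set Ω)) ∈ sets i} else univ)} := by
        ext f
        simp only [mem_preimage, mem_setOf_eq]
        constructor
        · intro h j
          by_cases hj : j = i
          · subst hj; rw [if_pos rfl]; exact h
          · rw [if_neg hj]; trivial
        · intro h
          have h4 := h i
          rwa [if_pos rfl] at h4
      rw [h3, key n _]
      rw [Finset.prod_congr rfl (fun j (_ : j ∈ Finset.univ) => show
          Pν (if j = i then {Kc : NonemptyCompacts Ω |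
            sInf (Y i '' (Kc : Set Ω)) ∈ sets i} else univ)
          = if j = i then Pν {Kc : NonemptyCompacts Ω |
            sInf (Y i '' (Kc : Set Ω)) ∈ sets i} else 1 from by
            split_ifs <;> simp)]
      rw [Finset.prod_ite_eq' Finset.univ i]
      simp
    have h1 : (⋂ i ∈ S,
        (fun f : ℕ → NonemptyCompacts Ω => sInf (Y i '' ((f i) : Set Ω))) ⁻¹' sets i)
        = {f : ℕ → NonemptyCompacts Ω | ∀ i : Fin n, f i ∈
            (if i ∈ S then {Kc : NonemptyCompacts Ω |
              sInf (Y i '' (Kc : Set Ω)) ∈ sets i} else univ)} := by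
      ext f
      simp only [mem_iInter, mem_preimage, mem_setOf_eq]
      constructor
      · intro h i
        by_cases hi : i ∈ S
        · rw [if_pos hi]; exact h i hi
        · rw [if_neg hi]; trivial
      · intro h i hi
        have h4 := h i
        rwa [if_pos hi] at h4
    rw [h1, key n _]
    rw [Finset.prod_congr rfl (fun i (_ : i ∈ Finset.univ) => show
        Pν (if i ∈ S then {Kc : NonemptyCompacts Ω |
          sInf (Y i '' (Kc : Set Ω)) ∈ sets i} else univ)
        = if i ∈ S then Pν {Kc : NonemptyCompacts Ω |
          sInf (Y i '' (Kc : Set Ω)) ∈ sets i} else 1 from by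
          split_ifs <;> simp)]
    rw [Finset.prod_ite_mem Finset.univ S, Finset.univ_inter]
    exact (Finset.prod_congr rfl fun i _ => (h2 i)).symm
  · intro t
    have hAmeas : ∀ i : Fin n, MeasurableSet {ω | t i ≤ Y i ω} := fun i =>
      measurableSet_le measurable_const (hYm i)
    have hset : {f : ℕ → NonemptyCompacts Ω |
          ∀ i : Fin n, t i ≤ sInf (Y i '' ((f i) : Set Ω))}
        = {f : ℕ → NonemptyCompacts Ω | ∀ i : Fin n, f i ∈
            {Kc : NonemptyCompacts Ω | (Kc : Set Ω) ⊆ {ω | t i ≤ Y i ω}}} := by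
      ext f
      simp only [mem_setOf_eq]
      refine forall_congr' fun i => ?_
      obtain ⟨C, hC⟩ := hYb i
      have hne : (Y i '' ((f i) : Set Ω)).Nonempty := (f i).nonempty.image _
      have hbdd : BddBelow (Y i '' ((f i) : Set Ω)) :=
        ⟨-C, by rintro _ ⟨ω, _, rfl⟩; exact (abs_le.mp (hC ω)).1⟩
      constructor
      · intro h ω hω
        exact le_trans h (csInf_le hbdd ⟨ω, hω, rfl⟩)
      · intro h
        exact le_csInf hne (by rintro _ ⟨ω, hω, rfl⟩; exact h hω)
    rw [hset, key n _, ENNReal.toReal_prod]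
    exact Finset.prod_congr rfl fun i _ => (hrep _ (hAmeas i)).symm
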